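/- Theorem 1 (global convergence of the GRESH iteration, exact inner step): In the surrogate setup, assume in addition that every entry of λ_Ω is strictly positive and that τ > ‖W‖₂. Then f attains its infimum over 𝒮, and for every starting point Ω⁽⁰⁾ ∈ 𝒮 the sequence defined by letting Ω^{(i+1)} be the (unique) minimizer of g(·, Ω^{(i)}) over 𝒮 converges (in ℝ^{(p+1)×p}) to a global minimizer of f over 𝒮. -/

import Mathlib

open Matrix
open scoped Classical

noncomputable section

/-- Squared Euclidean norm of a vector. -/
def sqnorm {ι : Type*} [Fintype ι] (v : ι → ℝ) : ℝ := ∑ i, v i ^ 2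

/-- Spectral norm (ℓ₂ operator norm) of a real matrix:
the supremum of `‖A v‖₂` over vectors `v` with `‖v‖₂ ≤ 1`. -/
def specNorm {ι κ : Type*} [Fintype ι] [Fintype κ] (A : Matrix ι κ ℝ) : ℝ :=
  sSup {c : ℝ | ∃ v : κ → ℝ, sqnorm v ≤ 1 ∧ c = Real.sqrt (sqnorm (A.mulVec v))}

/-- (Columnwise) vectorization of `Ω ∈ ℝ^{(p+1)×p}`, using the product index set
`Fin (p+1) × Fin p` for `ℝ^{(p+1)p}`. -/
def vecM {p : ℕ} (Ω : Matrix (Fin (p + 1)) (Fin p) ℝ) : Fin (p + 1) × Fin p → ℝ :=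
  fun ik => Ω ik.1 ik.2

/-- The convex penalty
`P(Ω) = Σ_j (λ_b)_j |b_j| + Σ_{j,k} (Λ_Φ)_{jk} |Φ_{jk}| + Σ_k (λ_Ω)_k ‖Ω[:,k]‖₂`,
where `Ω = [b, Φᵀ]ᵀ`, i.e. `b_j = Ω 0 j` and `Φ j k = Ω k.succ j`. -/
def Pen {p : ℕ} (lb : Fin p → ℝ) (LPhi : Matrix (Fin p) (Fin p) ℝ) (lO : Fin p → ℝ)
    (Ω : Matrix (Fin (p + 1)) (Fin p) ℝ) : ℝ :=
  (∑ j, lb j * |Ω 0 j|) + (∑ j, ∑ k, LPhi j k * |Ω k.succ j|)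
    + ∑ k, lO k * Real.sqrt (∑ i, Ω i k ^ 2)

/-- The quadratic loss `ℓ(Ω) = (1/2)‖y − W vec(Ω)‖₂²`. -/
def lossL {n p : ℕ} (W : Matrix (Fin n) (Fin (p + 1) × Fin p) ℝ) (y : Fin n → ℝ)
    (Ω : Matrix (Fin (p + 1)) (Fin p) ℝ) : ℝ :=
  (1 / 2) * ∑ i, (y i - W.mulVec (vecM Ω) i) ^ 2

/-- The objective `f(Ω) = ℓ(Ω) + P(Ω)`. -/
def fObj {n p : ℕ} (W : Matrix (Fin n) (Fin (p + 1) × Fin p) ℝ) (y : Fin n → ℝ)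
    (lb : Fin p → ℝ) (LPhi : Matrix (Fin p) (Fin p) ℝ) (lO : Fin p → ℝ)
    (Ω : Matrix (Fin (p + 1)) (Fin p) ℝ) : ℝ :=
  lossL W y Ω + Pen lb LPhi lO Ω

/-- The surrogate
`g(Ω, Ω') = ℓ(Ω') − ⟨Wᵀ(y − W vec Ω'), vec Ω − vec Ω'⟩ + (τ²/2)‖Ω − Ω'‖_F² + P(Ω)`. -/
def gSur {n p : ℕ} (W : Matrix (Fin n) (Fin (p + 1) × Fin p) ℝ) (y : Fin n → ℝ)
    (lb : Fin p → ℝ) (LPhi : Matrix (Fin p) (Fin p) ℝ) (lO : Fin p → ℝ) (τ : ℝ)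
    (Ω Ω' : Matrix (Fin (p + 1)) (Fin p) ℝ) : ℝ :=
  lossL W y Ω'
    - (∑ u : Fin (p + 1) × Fin p,
        Wᵀ.mulVec (fun i => y i - W.mulVec (vecM Ω') i) u * (vecM Ω u - vecM Ω' u))
    + (τ ^ 2 / 2) * (∑ i, ∑ k, (Ω i k - Ω' i k) ^ 2)
    + Pen lb LPhi lO Ω

/-- The feasible set `𝒮 = {Ω = [b, Φᵀ]ᵀ : Φ = Φᵀ}`. -/
def Sfeas (p : ℕ) : Set (Matrix (Fin (p + 1)) (Fin p) ℝ) :=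
  {Ω | ∀ j k : Fin p, Ω j.succ k = Ω k.succ j}


def nsqM {p : ℕ} (A : Matrix (Fin (p + 1)) (Fin p) ℝ) : ℝ := ∑ i, ∑ k, A i k ^ 2

lemma nsqM_nonneg {p : ℕ} (A : Matrix (Fin (p + 1)) (Fin p) ℝ) : 0 ≤ nsqM A := by
  unfold nsqM; positivity

lemma nsqM_sub_comm {p : ℕ} (A B : Matrix (Fin (p + 1)) (Fin p) ℝ) :
    nsqM (A - B) = nsqM (B - A) := by
  unfold nsqM
  refine Finset.sum_congr rfl fun i _ => Finset.sum_congr rfl fun k _ => ?_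
  simp [Matrix.sub_apply]; ring

lemma half_sq_expand {n : ℕ} (y a b : Fin n → ℝ) :
    (1/2 : ℝ) * ∑ i, (y i - a i)^2
      = (1/2 : ℝ) * ∑ i, (y i - b i)^2 - (∑ i, (y i - b i) * (a i - b i))
        + (1/2 : ℝ) * ∑ i, (a i - b i)^2 := by
  have h : ∀ i ∈ Finset.univ, (y i - a i)^2
      = ((y i - b i)^2 - 2*((y i - b i) * (a i - b i)) + (a i - b i)^2) :=
    fun i _ => by ring
  rw [Finset.sum_congr rfl h, Finset.sum_add_distrib, Finset.sum_sub_distrib,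
    ← Finset.mul_sum]
  ring

lemma cross_swap {n p : ℕ} (W : Matrix (Fin n) (Fin (p + 1) × Fin p) ℝ)
    (r : Fin n → ℝ) (d : Fin (p + 1) × Fin p → ℝ) :
    ∑ u, Wᵀ.mulVec r u * d u = ∑ i, r i * (W.mulVec d i) := by
  simp only [Matrix.mulVec, dotProduct, Matrix.transpose_apply,
    Finset.sum_mul, Finset.mul_sum]
  rw [Finset.sum_comm]
  exact Finset.sum_congr rfl fun i _ => Finset.sum_congr rfl fun u _ => by ring

lemma mulVec_sub_apply {n p : ℕ} (W : Matrix (Fin n) (Fin (p + 1) × Fin p) ℝ)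
    (A B : Matrix (Fin (p + 1)) (Fin p) ℝ) (i : Fin n) :
    W.mulVec (fun u => vecM A u - vecM B u) i
      = W.mulVec (vecM A) i - W.mulVec (vecM B) i := by
  simp only [Matrix.mulVec, dotProduct, mul_sub, Finset.sum_sub_distrib]

lemma gSur_eq {n p : ℕ} (W : Matrix (Fin n) (Fin (p + 1) × Fin p) ℝ) (y : Fin n → ℝ)
    (lb : Fin p → ℝ) (LPhi : Matrix (Fin p) (Fin p) ℝ) (lO : Fin p → ℝ) (τ : ℝ)
    (Ω Ω' : Matrix (Fin (p + 1)) (Fin p) ℝ) :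
    gSur W y lb LPhi lO τ Ω Ω'
      = fObj W y lb LPhi lO Ω + (τ ^ 2 / 2) * nsqM (Ω - Ω')
        - (1/2 : ℝ) * sqnorm (fun i => W.mulVec (vecM Ω) i - W.mulVec (vecM Ω') i) := by
  unfold gSur fObj lossL
  rw [cross_swap]
  have h1 : ∑ i, (y i - W.mulVec (vecM Ω') i) * (W.mulVec (fun u => vecM Ω u - vecM Ω' u) i)
      = ∑ i, (y i - W.mulVec (vecM Ω') i) * (W.mulVec (vecM Ω) i - W.mulVec (vecM Ω') i) :=
    Finset.sum_congr rfl fun i _ => by rw [mulVec_sub_apply]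
  rw [h1, half_sq_expand y (W.mulVec (vecM Ω)) (W.mulVec (vecM Ω'))]
  unfold sqnorm nsqM
  simp only [Matrix.sub_apply]
  have h2 : ∑ i, (y i - W.mulVec (vecM Ω') i) * (W.mulVec (vecM Ω) i - W.mulVec (vecM Ω') i)
      = ∑ i, (y i - W.mulVec (vecM Ω') i) * (W.mulVec (vecM Ω) i - W.mulVec (vecM Ω') i) := rfl
  ring


lemma sqrt_sum_sq_smul {m : ℕ} (c : ℝ) (x : Fin m → ℝ) :
    Real.sqrt (∑ i, (c * x i)^2) = |c| * Real.sqrt (∑ i, x i ^ 2) := by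
  have h : ∑ i, (c * x i)^2 = c^2 * ∑ i, x i ^ 2 := by
    rw [Finset.mul_sum]; exact Finset.sum_congr rfl fun i _ => by ring
  rw [h, Real.sqrt_mul (sq_nonneg c), Real.sqrt_sq_eq_abs]

lemma sqrt_sum_sq_add_le {m : ℕ} (x y : Fin m → ℝ) :
    Real.sqrt (∑ i, (x i + y i)^2)
      ≤ Real.sqrt (∑ i, x i ^ 2) + Real.sqrt (∑ i, y i ^ 2) := by
  have key : ∀ z : EuclideanSpace ℝ (Fin m), ‖z‖ = Real.sqrt (∑ i, z i ^ 2) := by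
    intro z
    rw [EuclideanSpace.norm_eq]
    congr 1
    exact Finset.sum_congr rfl fun i _ => by rw [Real.norm_eq_abs, sq_abs]
  set X : EuclideanSpace ℝ (Fin m) := (WithLp.equiv 2 (Fin m → ℝ)).symm x
  set Y : EuclideanSpace ℝ (Fin m) := (WithLp.equiv 2 (Fin m → ℝ)).symm y
  have hX : ∀ i, X i = x i := fun i => rfl
  have hY : ∀ i, Y i = y i := fun i => rfl
  have hXY : ∀ i, (X + Y) i = x i + y i := fun i => rfl
  have := norm_add_le X Y
  rw [key X, key Y, key (X + Y)] at this
  simpa only [hX, hY, hXY] using this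

lemma abs_comb_le {t a b : ℝ} (h0 : 0 ≤ t) (h1 : t ≤ 1) :
    |(1 - t) * a + t * b| ≤ (1 - t) * |a| + t * |b| := by
  calc |(1 - t) * a + t * b| ≤ |(1 - t) * a| + |t * b| := abs_add_le _ _
    _ = (1 - t) * |a| + t * |b| := by
        rw [abs_mul, abs_mul, abs_of_nonneg (by linarith), abs_of_nonneg h0]

lemma pen_convex {p : ℕ} (lb : Fin p → ℝ) (hlb : ∀ j, 0 ≤ lb j)
    (LPhi : Matrix (Fin p) (Fin p) ℝ) (hLPhi : ∀ j k, 0 ≤ LPhi j k)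
    (lO : Fin p → ℝ) (hlO : ∀ k, 0 ≤ lO k)
    {t : ℝ} (h0 : 0 ≤ t) (h1 : t ≤ 1) (A B : Matrix (Fin (p + 1)) (Fin p) ℝ) :
    Pen lb LPhi lO ((1 - t) • A + t • B)
      ≤ (1 - t) * Pen lb LPhi lO A + t * Pen lb LPhi lO B := by
  have hC : ∀ i k, ((1 - t) • A + t • B) i k = (1 - t) * A i k + t * B i k := by
    intro i k; simp [Matrix.add_apply, Matrix.smul_apply, smul_eq_mul]
  unfold Pen
  have e1 : ∑ j, lb j * |((1 - t) • A + t • B) 0 j|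
      ≤ (1 - t) * ∑ j, lb j * |A 0 j| + t * ∑ j, lb j * |B 0 j| := by
    rw [Finset.mul_sum, Finset.mul_sum, ← Finset.sum_add_distrib]
    refine Finset.sum_le_sum fun j _ => ?_
    rw [hC]
    calc lb j * |(1 - t) * A 0 j + t * B 0 j|
        ≤ lb j * ((1 - t) * |A 0 j| + t * |B 0 j|) :=
          mul_le_mul_of_nonneg_left (abs_comb_le h0 h1) (hlb j)
      _ = (1 - t) * (lb j * |A 0 j|) + t * (lb j * |B 0 j|) := by ring
  have e2 : ∑ j, ∑ k, LPhi j k * |((1 - t) • A + t • B) k.succ j|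
      ≤ (1 - t) * ∑ j, ∑ k, LPhi j k * |A k.succ j|
        + t * ∑ j, ∑ k, LPhi j k * |B k.succ j| := by
    rw [Finset.mul_sum, Finset.mul_sum, ← Finset.sum_add_distrib]
    refine Finset.sum_le_sum fun j _ => ?_
    rw [Finset.mul_sum, Finset.mul_sum, ← Finset.sum_add_distrib]
    refine Finset.sum_le_sum fun k _ => ?_
    rw [hC]
    calc LPhi j k * |(1 - t) * A k.succ j + t * B k.succ j|
        ≤ LPhi j k * ((1 - t) * |A k.succ j| + t * |B k.succ j|) :=
          mul_le_mul_of_nonneg_left (abs_comb_le h0 h1) (hLPhi j k)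
      _ = (1 - t) * (LPhi j k * |A k.succ j|) + t * (LPhi j k * |B k.succ j|) := by ring
  have e3 : ∑ k, lO k * Real.sqrt (∑ i, ((1 - t) • A + t • B) i k ^ 2)
      ≤ (1 - t) * ∑ k, lO k * Real.sqrt (∑ i, A i k ^ 2)
        + t * ∑ k, lO k * Real.sqrt (∑ i, B i k ^ 2) := by
    rw [Finset.mul_sum, Finset.mul_sum, ← Finset.sum_add_distrib]
    refine Finset.sum_le_sum fun k _ => ?_
    have hs : ∑ i, ((1 - t) • A + t • B) i k ^ 2
        = ∑ i, ((1 - t) * A i k + t * B i k) ^ 2 :=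
      Finset.sum_congr rfl fun i _ => by rw [hC]
    have htri : Real.sqrt (∑ i, ((1 - t) * A i k + t * B i k) ^ 2)
        ≤ (1 - t) * Real.sqrt (∑ i, A i k ^ 2) + t * Real.sqrt (∑ i, B i k ^ 2) := by
      have := sqrt_sum_sq_add_le (fun i => (1 - t) * A i k) (fun i => t * B i k)
      rw [sqrt_sum_sq_smul, sqrt_sum_sq_smul, abs_of_nonneg (by linarith : (0:ℝ) ≤ 1 - t),
        abs_of_nonneg h0] at this
      exact this
    calc lO k * Real.sqrt (∑ i, ((1 - t) • A + t • B) i k ^ 2)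
        = lO k * Real.sqrt (∑ i, ((1 - t) * A i k + t * B i k) ^ 2) := by rw [hs]
      _ ≤ lO k * ((1 - t) * Real.sqrt (∑ i, A i k ^ 2) + t * Real.sqrt (∑ i, B i k ^ 2)) :=
          mul_le_mul_of_nonneg_left htri (hlO k)
      _ = (1 - t) * (lO k * Real.sqrt (∑ i, A i k ^ 2))
          + t * (lO k * Real.sqrt (∑ i, B i k ^ 2)) := by ring
  linarith

lemma Sfeas_convex {p : ℕ} {t : ℝ} {A B : Matrix (Fin (p + 1)) (Fin p) ℝ}
    (hA : A ∈ Sfeas p) (hB : B ∈ Sfeas p) : (1 - t) • A + t • B ∈ Sfeas p := by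
  intro j k
  simp only [Matrix.add_apply, Matrix.smul_apply, smul_eq_mul]
  rw [hA j k, hB j k]


section Spec
variable {ι κ : Type*} [Fintype ι] [Fintype κ] (A : Matrix ι κ ℝ)

lemma sqnorm_nonneg {ι : Type*} [Fintype ι] (v : ι → ℝ) : 0 ≤ sqnorm v := by
  unfold sqnorm; positivity

lemma spec_bddAbove :
    BddAbove {c : ℝ | ∃ v : κ → ℝ, sqnorm v ≤ 1 ∧ c = Real.sqrt (sqnorm (A.mulVec v))} := by
  refine ⟨Real.sqrt (∑ i, ∑ u, A i u ^ 2), ?_⟩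
  rintro c ⟨v, hv, rfl⟩
  have hb : sqnorm (A.mulVec v) ≤ ∑ i, ∑ u, A i u ^ 2 := by
    unfold sqnorm
    refine Finset.sum_le_sum fun i _ => ?_
    have h1 : (∑ u, A i u * v u) ^ 2 ≤ (∑ u, A i u ^ 2) * ∑ u, v u ^ 2 :=
      Finset.sum_mul_sq_le_sq_mul_sq Finset.univ (fun u => A i u) v
    have h2 : (∑ u, A i u ^ 2) * ∑ u, v u ^ 2 ≤ (∑ u, A i u ^ 2) * 1 :=
      mul_le_mul_of_nonneg_left hv (by positivity)
    calc A.mulVec v i ^ 2 = (∑ u, A i u * v u) ^ 2 := rfl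
      _ ≤ (∑ u, A i u ^ 2) * ∑ u, v u ^ 2 := h1
      _ ≤ ∑ u, A i u ^ 2 := by rw [mul_one] at h2; exact h2
  exact Real.sqrt_le_sqrt hb

lemma zero_mem_spec_set :
    (0:ℝ) ∈ {c : ℝ | ∃ v : κ → ℝ, sqnorm v ≤ 1 ∧ c = Real.sqrt (sqnorm (A.mulVec v))} := by
  refine ⟨0, by simp [sqnorm], ?_⟩
  simp [sqnorm, Matrix.mulVec_zero]

lemma specNorm_nonneg : 0 ≤ specNorm A :=
  le_csSup (spec_bddAbove A) (zero_mem_spec_set A)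

lemma sqnorm_mulVec_le (v : κ → ℝ) :
    sqnorm (A.mulVec v) ≤ specNorm A ^ 2 * sqnorm v := by
  by_cases h : sqnorm v = 0
  · have hv : v = 0 := by
      funext j
      have h0 : ∀ u ∈ Finset.univ, (0:ℝ) ≤ v u ^ 2 := fun u _ => sq_nonneg _
      have := (Finset.sum_eq_zero_iff_of_nonneg h0).mp h j (Finset.mem_univ j)
      exact pow_eq_zero_iff two_ne_zero |>.mp this
    rw [hv, Matrix.mulVec_zero]
    simp [sqnorm]
  · have hpos : 0 < sqnorm v := lt_of_le_of_ne (sqnorm_nonneg v) (Ne.symm h)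
    set s : ℝ := Real.sqrt (sqnorm v) with hsdef
    have hs2 : s ^ 2 = sqnorm v := Real.sq_sqrt (sqnorm_nonneg v)
    have hspos : 0 < s := Real.sqrt_pos.mpr hpos
    set u : κ → ℝ := fun j => v j / s with hu
    have hu1 : sqnorm u = 1 := by
      unfold sqnorm
      simp only [hu, div_pow, ← Finset.sum_div]
      rw [hs2]
      exact div_self h
    have hWu : A.mulVec u = fun i => A.mulVec v i / s := by
      funext i
      simp only [Matrix.mulVec, dotProduct, hu]
      rw [Finset.sum_div]
      exact Finset.sum_congr rfl fun j _ => by ring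
    have hsq : sqnorm (A.mulVec u) = sqnorm (A.mulVec v) / s ^ 2 := by
      unfold sqnorm
      rw [hWu]
      simp only [div_pow, ← Finset.sum_div]
    have hmem : Real.sqrt (sqnorm (A.mulVec u)) ≤ specNorm A :=
      le_csSup (spec_bddAbove A) ⟨u, le_of_eq hu1, rfl⟩
    have hb : sqnorm (A.mulVec u) ≤ specNorm A ^ 2 := by
      have h1 : Real.sqrt (sqnorm (A.mulVec u)) ^ 2 ≤ specNorm A ^ 2 :=
        pow_le_pow_left₀ (Real.sqrt_nonneg _) hmem 2
      rwa [Real.sq_sqrt (sqnorm_nonneg _)] at h1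
    have := (div_le_iff₀ (by positivity : (0:ℝ) < s ^ 2)).mp (hsq ▸ hb)
    calc sqnorm (A.mulVec v) ≤ specNorm A ^ 2 * s ^ 2 := this
      _ = specNorm A ^ 2 * sqnorm v := by rw [hs2]

end Spec

section Main
variable {n p : ℕ} (W : Matrix (Fin n) (Fin (p + 1) × Fin p) ℝ) (y : Fin n → ℝ)
  (lb : Fin p → ℝ) (LPhi : Matrix (Fin p) (Fin p) ℝ) (lO : Fin p → ℝ) (τ : ℝ)

lemma gSur_comb (hlb : ∀ j, 0 ≤ lb j) (hLPhi : ∀ j k, 0 ≤ LPhi j k)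
    (hlO : ∀ k, 0 ≤ lO k) {t : ℝ} (h0 : 0 ≤ t) (h1 : t ≤ 1)
    (A B Ω' : Matrix (Fin (p + 1)) (Fin p) ℝ) :
    gSur W y lb LPhi lO τ ((1 - t) • A + t • B) Ω'
      ≤ (1 - t) * gSur W y lb LPhi lO τ A Ω' + t * gSur W y lb LPhi lO τ B Ω'
        - (τ ^ 2 / 2) * (t * (1 - t)) * nsqM (A - B) := by
  have hC : ∀ i k, ((1 - t) • A + t • B) i k = (1 - t) * A i k + t * B i k := by
    intro i k; simp [Matrix.add_apply, Matrix.smul_apply, smul_eq_mul]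
  unfold gSur
  have hlin : ∑ u : Fin (p + 1) × Fin p,
        Wᵀ.mulVec (fun i => y i - W.mulVec (vecM Ω') i) u
          * (vecM ((1 - t) • A + t • B) u - vecM Ω' u)
      = (1 - t) * ∑ u : Fin (p + 1) × Fin p,
          Wᵀ.mulVec (fun i => y i - W.mulVec (vecM Ω') i) u * (vecM A u - vecM Ω' u)
        + t * ∑ u : Fin (p + 1) × Fin p,
          Wᵀ.mulVec (fun i => y i - W.mulVec (vecM Ω') i) u * (vecM B u - vecM Ω' u) := by
    rw [Finset.mul_sum, Finset.mul_sum, ← Finset.sum_add_distrib]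
    refine Finset.sum_congr rfl fun u _ => ?_
    simp only [vecM, hC]
    ring
  have hquad : ∑ i, ∑ k, (((1 - t) • A + t • B) i k - Ω' i k) ^ 2
      = (1 - t) * ∑ i, ∑ k, (A i k - Ω' i k) ^ 2
        + t * ∑ i, ∑ k, (B i k - Ω' i k) ^ 2
        - (t * (1 - t)) * nsqM (A - B) := by
    unfold nsqM
    simp only [Finset.mul_sum, Matrix.sub_apply]
    rw [← Finset.sum_add_distrib, ← Finset.sum_sub_distrib]
    refine Finset.sum_congr rfl fun i _ => ?_
    rw [← Finset.sum_add_distrib, ← Finset.sum_sub_distrib]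
    refine Finset.sum_congr rfl fun k _ => ?_
    rw [hC]
    ring
  have hpen := pen_convex lb hlb LPhi hLPhi lO hlO h0 h1 A B
  rw [hlin, hquad]
  have hrhs :
      (1 - t) * (lossL W y Ω'
          - (∑ u : Fin (p + 1) × Fin p,
              Wᵀ.mulVec (fun i => y i - W.mulVec (vecM Ω') i) u * (vecM A u - vecM Ω' u))
          + (τ ^ 2 / 2) * (∑ i, ∑ k, (A i k - Ω' i k) ^ 2) + Pen lb LPhi lO A)
        + t * (lossL W y Ω'
          - (∑ u : Fin (p + 1) × Fin p,
              Wᵀ.mulVec (fun i => y i - W.mulVec (vecM Ω') i) u * (vecM B u - vecM Ω' u))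
          + (τ ^ 2 / 2) * (∑ i, ∑ k, (B i k - Ω' i k) ^ 2) + Pen lb LPhi lO B)
        - (τ ^ 2 / 2) * (t * (1 - t)) * nsqM (A - B)
      = (lossL W y Ω'
          - ((1 - t) * ∑ u : Fin (p + 1) × Fin p,
              Wᵀ.mulVec (fun i => y i - W.mulVec (vecM Ω') i) u * (vecM A u - vecM Ω' u)
            + t * ∑ u : Fin (p + 1) × Fin p,
              Wᵀ.mulVec (fun i => y i - W.mulVec (vecM Ω') i) u * (vecM B u - vecM Ω' u))
          + (τ ^ 2 / 2) * ((1 - t) * ∑ i, ∑ k, (A i k - Ω' i k) ^ 2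
              + t * ∑ i, ∑ k, (B i k - Ω' i k) ^ 2
              - (t * (1 - t)) * nsqM (A - B)))
        + ((1 - t) * Pen lb LPhi lO A + t * Pen lb LPhi lO B) := by ring
  rw [hrhs]
  linarith

lemma gSur_strongmin (hlb : ∀ j, 0 ≤ lb j) (hLPhi : ∀ j k, 0 ≤ LPhi j k)
    (hlO : ∀ k, 0 ≤ lO k) {M Ω Ω' : Matrix (Fin (p + 1)) (Fin p) ℝ}
    (hM : M ∈ Sfeas p) (hΩ : Ω ∈ Sfeas p)
    (hmin : ∀ X ∈ Sfeas p, gSur W y lb LPhi lO τ M Ω' ≤ gSur W y lb LPhi lO τ X Ω') :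
    gSur W y lb LPhi lO τ M Ω' + (τ ^ 2 / 2) * nsqM (Ω - M)
      ≤ gSur W y lb LPhi lO τ Ω Ω' := by
  set gM := gSur W y lb LPhi lO τ M Ω' with hgM
  set gΩ := gSur W y lb LPhi lO τ Ω Ω' with hgΩ
  set D := nsqM (Ω - M) with hD
  have hDMΩ : nsqM (M - Ω) = D := nsqM_sub_comm M Ω
  have hk : ∀ k : ℕ, gM + (τ ^ 2 / 2) * (1 - 1 / ((k : ℝ) + 1)) * D ≤ gΩ := by
    intro k
    set t : ℝ := 1 / ((k : ℝ) + 1) with ht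
    have hk1 : (0:ℝ) < (k : ℝ) + 1 := by positivity
    have ht0 : 0 < t := by positivity
    have ht1 : t ≤ 1 := by
      rw [ht, div_le_one hk1]; linarith [Nat.cast_nonneg (α := ℝ) k]
    have hcomb := gSur_comb W y lb LPhi lO τ hlb hLPhi hlO ht0.le ht1 M Ω Ω'
    have hmem : (1 - t) • M + t • Ω ∈ Sfeas p := Sfeas_convex hM hΩ
    have hge := hmin _ hmem
    rw [hDMΩ] at hcomb
    have hmul : t * (gM + (τ ^ 2 / 2) * (1 - t) * D) ≤ t * gΩ := by nlinarith
    exact le_of_mul_le_mul_left hmul ht0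
  have hten : Filter.Tendsto
      (fun k : ℕ => gM + (τ ^ 2 / 2) * (1 - 1 / ((k : ℝ) + 1)) * D)
      Filter.atTop (nhds (gM + (τ ^ 2 / 2) * (1 - 0) * D)) := by
    refine Filter.Tendsto.const_add _ (Filter.Tendsto.mul_const _ ?_)
    exact Filter.Tendsto.const_mul _
      (tendsto_const_nhds.sub tendsto_one_div_add_atTop_nhds_zero_nat)
  have := le_of_tendsto' hten hk
  simpa using this

lemma sqnorm_vec_sub (A B : Matrix (Fin (p + 1)) (Fin p) ℝ) :
    sqnorm (fun u : Fin (p + 1) × Fin p => vecM A u - vecM B u) = nsqM (A - B) := by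
  unfold sqnorm nsqM vecM
  rw [Fintype.sum_prod_type]
  simp [Matrix.sub_apply]

lemma fObj_le_gSur (hτ : specNorm W ≤ τ) (Ω Ω' : Matrix (Fin (p + 1)) (Fin p) ℝ) :
    fObj W y lb LPhi lO Ω ≤ gSur W y lb LPhi lO τ Ω Ω' := by
  rw [gSur_eq]
  have hfun : (fun i => W.mulVec (vecM Ω) i - W.mulVec (vecM Ω') i)
      = W.mulVec (fun u => vecM Ω u - vecM Ω' u) := by
    funext i; rw [mulVec_sub_apply]
  have h1 : sqnorm (fun i => W.mulVec (vecM Ω) i - W.mulVec (vecM Ω') i)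
      ≤ τ ^ 2 * nsqM (Ω - Ω') := by
    rw [hfun]
    calc sqnorm (W.mulVec (fun u => vecM Ω u - vecM Ω' u))
        ≤ specNorm W ^ 2 * sqnorm (fun u => vecM Ω u - vecM Ω' u) :=
          sqnorm_mulVec_le W _
      _ ≤ τ ^ 2 * sqnorm (fun u => vecM Ω u - vecM Ω' u) := by
          have := pow_le_pow_left₀ (specNorm_nonneg W) hτ 2
          exact mul_le_mul_of_nonneg_right this (sqnorm_nonneg _)
      _ = τ ^ 2 * nsqM (Ω - Ω') := by rw [sqnorm_vec_sub]
  linarith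

lemma gSur_self (Ω' : Matrix (Fin (p + 1)) (Fin p) ℝ) :
    gSur W y lb LPhi lO τ Ω' Ω' = fObj W y lb LPhi lO Ω' := by
  rw [gSur_eq]
  have h1 : nsqM (Ω' - Ω') = 0 := by simp [nsqM, Matrix.sub_apply]
  have h2 : sqnorm (fun i => W.mulVec (vecM Ω') i - W.mulVec (vecM Ω') i) = 0 := by
    simp [sqnorm]
  rw [h1, h2]; ring

lemma key_ineq (hlb : ∀ j, 0 ≤ lb j) (hLPhi : ∀ j k, 0 ≤ LPhi j k)
    (hlO : ∀ k, 0 ≤ lO k) (hτ : specNorm W ≤ τ)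
    {Z M' Ωp : Matrix (Fin (p + 1)) (Fin p) ℝ}
    (hZ : Z ∈ Sfeas p) (hM' : M' ∈ Sfeas p)
    (hmin : ∀ X ∈ Sfeas p, gSur W y lb LPhi lO τ M' Ωp ≤ gSur W y lb LPhi lO τ X Ωp) :
    fObj W y lb LPhi lO M' + (τ ^ 2 / 2) * nsqM (M' - Z)
      ≤ fObj W y lb LPhi lO Z + (τ ^ 2 / 2) * nsqM (Ωp - Z) := by
  have h1 := gSur_strongmin W y lb LPhi lO τ hlb hLPhi hlO hM' hZ hmin
  have h2 : gSur W y lb LPhi lO τ Z Ωp ≤ fObj W y lb LPhi lO Z + (τ ^ 2 / 2) * nsqM (Z - Ωp) := by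
    rw [gSur_eq]
    have := sqnorm_nonneg (fun i => W.mulVec (vecM Z) i - W.mulVec (vecM Ωp) i)
    linarith
  have h3 := fObj_le_gSur W y lb LPhi lO τ hτ M' Ωp
  rw [← nsqM_sub_comm Z M', ← nsqM_sub_comm Z Ωp]
  linarith

lemma fObj_continuous : Continuous (fObj W y lb LPhi lO) := by
  unfold fObj lossL Pen Matrix.mulVec dotProduct vecM
  fun_prop

lemma isClosed_Sfeas : IsClosed (Sfeas p) := by
  have h : Sfeas p = ⋂ (j : Fin p), ⋂ (k : Fin p),
      {Ω : Matrix (Fin (p + 1)) (Fin p) ℝ | Ω j.succ k = Ω k.succ j} := by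
    ext Ω; simp [Sfeas, Set.mem_iInter]
  rw [h]
  refine isClosed_iInter fun j => isClosed_iInter fun k => isClosed_eq ?_ ?_ <;> fun_prop

lemma Pen_nonneg (hlb : ∀ j, 0 ≤ lb j) (hLPhi : ∀ j k, 0 ≤ LPhi j k)
    (hlO : ∀ k, 0 ≤ lO k) (Ω : Matrix (Fin (p + 1)) (Fin p) ℝ) :
    0 ≤ Pen lb LPhi lO Ω := by
  unfold Pen
  have h1 : (0:ℝ) ≤ ∑ j, lb j * |Ω 0 j| :=
    Finset.sum_nonneg fun j _ => mul_nonneg (hlb j) (abs_nonneg _)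
  have h2 : (0:ℝ) ≤ ∑ j, ∑ k, LPhi j k * |Ω k.succ j| :=
    Finset.sum_nonneg fun j _ => Finset.sum_nonneg fun k _ =>
      mul_nonneg (hLPhi j k) (abs_nonneg _)
  have h3 : (0:ℝ) ≤ ∑ k, lO k * Real.sqrt (∑ i, Ω i k ^ 2) :=
    Finset.sum_nonneg fun k _ => mul_nonneg (hlO k) (Real.sqrt_nonneg _)
  linarith

lemma entry_le_fObj (hlb : ∀ j, 0 ≤ lb j) (hLPhi : ∀ j k, 0 ≤ LPhi j k)
    (hlO : ∀ k, 0 ≤ lO k) (Ω : Matrix (Fin (p + 1)) (Fin p) ℝ) (i : Fin (p + 1)) (k : Fin p) :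
    lO k * |Ω i k| ≤ fObj W y lb LPhi lO Ω := by
  have habs : |Ω i k| ≤ Real.sqrt (∑ i', Ω i' k ^ 2) := by
    rw [← Real.sqrt_sq_eq_abs]
    exact Real.sqrt_le_sqrt (Finset.single_le_sum (fun i' _ => sq_nonneg (Ω i' k))
      (Finset.mem_univ i))
  have h1 : lO k * |Ω i k| ≤ lO k * Real.sqrt (∑ i', Ω i' k ^ 2) :=
    mul_le_mul_of_nonneg_left habs (hlO k)
  have h2 : lO k * Real.sqrt (∑ i', Ω i' k ^ 2)
      ≤ ∑ k', lO k' * Real.sqrt (∑ i', Ω i' k' ^ 2) :=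
    Finset.single_le_sum (f := fun k' => lO k' * Real.sqrt (∑ i', Ω i' k' ^ 2))
      (fun k' _ => mul_nonneg (hlO k') (Real.sqrt_nonneg _)) (Finset.mem_univ k)
  have hloss : (0:ℝ) ≤ lossL W y Ω := by unfold lossL; positivity
  have h3 : (0:ℝ) ≤ ∑ j, lb j * |Ω 0 j| :=
    Finset.sum_nonneg fun j _ => mul_nonneg (hlb j) (abs_nonneg _)
  have h4 : (0:ℝ) ≤ ∑ j, ∑ k', LPhi j k' * |Ω k'.succ j| :=
    Finset.sum_nonneg fun j _ => Finset.sum_nonneg fun k' _ =>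
      mul_nonneg (hLPhi j k') (abs_nonneg _)
  unfold fObj Pen
  linarith

lemma entry_sq_le_nsqM (A : Matrix (Fin (p + 1)) (Fin p) ℝ) (j : Fin (p + 1)) (k : Fin p) :
    A j k ^ 2 ≤ nsqM A := by
  unfold nsqM
  calc A j k ^ 2 ≤ ∑ k', A j k' ^ 2 :=
        Finset.single_le_sum (f := fun k' => A j k' ^ 2)
          (fun k' _ => sq_nonneg _) (Finset.mem_univ k)
    _ ≤ ∑ i, ∑ k', A i k' ^ 2 :=
        Finset.single_le_sum (f := fun i => ∑ k', A i k' ^ 2)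
          (fun i _ => Finset.sum_nonneg fun k' _ => sq_nonneg _) (Finset.mem_univ j)

lemma zero_mem_Sfeas : (0 : Matrix (Fin (p + 1)) (Fin p) ℝ) ∈ Sfeas p := fun j k => rfl

lemma exists_min (hlb : ∀ j, 0 ≤ lb j) (hLPhi : ∀ j k, 0 ≤ LPhi j k)
    (hlO : ∀ k, 0 < lO k) :
    ∃ Ωm ∈ Sfeas p, ∀ Ω ∈ Sfeas p,
      fObj W y lb LPhi lO Ωm ≤ fObj W y lb LPhi lO Ω := by
  set F := fObj W y lb LPhi lO with hF
  set f0 := F 0 with hf0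
  set K : Set (Matrix (Fin (p + 1)) (Fin p) ℝ) :=
    Set.pi Set.univ (fun _ : Fin (p + 1) => Set.pi Set.univ
      (fun k : Fin p => Set.Icc (-(f0 / lO k)) (f0 / lO k))) with hK
  have hKcomp : IsCompact K :=
    isCompact_univ_pi fun _ => isCompact_univ_pi fun _ => isCompact_Icc
  set S' : Set (Matrix (Fin (p + 1)) (Fin p) ℝ) := Sfeas p ∩ {Ω | F Ω ≤ f0} with hS'
  have hS'closed : IsClosed S' :=
    (isClosed_Sfeas).inter (isClosed_le (fObj_continuous W y lb LPhi lO) continuous_const)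
  have hsub : S' ⊆ K := by
    rintro Ω ⟨_, hΩf⟩
    intro i _
    intro k _
    have h1 : lO k * |Ω i k| ≤ f0 :=
      le_trans (entry_le_fObj W y lb LPhi lO hlb hLPhi (fun k' => (hlO k').le) Ω i k) hΩf
    have h2 : |Ω i k| ≤ f0 / lO k := (le_div_iff₀ (hlO k)).mpr (by linarith [h1])
    have := abs_le.mp h2
    exact ⟨by linarith [this.1], this.2⟩
  have hcomp : IsCompact S' := hKcomp.of_isClosed_subset hS'closed hsub
  have hne : S'.Nonempty := ⟨0, zero_mem_Sfeas, hf0.symm.le⟩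
  obtain ⟨Ωm, hmem, hminOn⟩ := hcomp.exists_isMinOn hne
    ((fObj_continuous W y lb LPhi lO).continuousOn)
  have hmin : ∀ Ω ∈ S', F Ωm ≤ F Ω := fun Ω hΩ => hminOn hΩ
  refine ⟨Ωm, hmem.1, fun Ω hΩ => ?_⟩
  by_cases h : F Ω ≤ f0
  · exact hmin Ω ⟨hΩ, h⟩
  · have h1 := hmin 0 ⟨zero_mem_Sfeas, hf0.symm.le⟩
    have h2 := not_le.mp h
    calc F Ωm ≤ f0 := h1
      _ ≤ F Ω := h2.le

end Main

instance matFirstCountable {a b : ℕ} :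
    FirstCountableTopology (Matrix (Fin a) (Fin b) ℝ) :=
  inferInstanceAs (FirstCountableTopology (Fin a → Fin b → ℝ))

lemma tendsto_matrix_of_entries {a b : ℕ} (x : ℕ → Matrix (Fin a) (Fin b) ℝ)
    (A : Matrix (Fin a) (Fin b) ℝ)
    (h : ∀ j k, Filter.Tendsto (fun i => x i j k) Filter.atTop (nhds (A j k))) :
    Filter.Tendsto x Filter.atTop (nhds A) := by
  have h1 : Filter.Tendsto (fun i => (x i : Fin a → Fin b → ℝ)) Filter.atTop
      (nhds (A : Fin a → Fin b → ℝ)) := by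
    refine tendsto_pi_nhds.mpr ?_
    intro j
    rw [tendsto_pi_nhds]
    intro k
    exact h j k
  exact h1


/-- **Theorem 1 (global convergence of the GRESH iteration, exact inner step)**:
if every entry of `λ_Ω` is strictly positive and `τ > ‖W‖₂`, then `f` attains its
infimum over `𝒮`, and every sequence produced by exact minimization of the
surrogate `g(·, Ω^{(i)})` over `𝒮` converges to a global minimizer of `f` over `𝒮`. -/
theorem gresh_global_convergence {n p : ℕ} (hn : 1 ≤ n) (hp : 1 ≤ p)
    (W : Matrix (Fin n) (Fin (p + 1) × Fin p) ℝ) (y : Fin n → ℝ)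
    (lb : Fin p → ℝ) (hlb : ∀ j, 0 ≤ lb j)
    (LPhi : Matrix (Fin p) (Fin p) ℝ) (hLPhi : ∀ j k, 0 ≤ LPhi j k)
    (lO : Fin p → ℝ) (hlO : ∀ k, 0 < lO k)
    (τ : ℝ) (hτ : specNorm W < τ) :
    (∃ Ωm ∈ Sfeas p, ∀ Ω ∈ Sfeas p, fObj W y lb LPhi lO Ωm ≤ fObj W y lb LPhi lO Ω) ∧
    (∀ Ωs : ℕ → Matrix (Fin (p + 1)) (Fin p) ℝ, Ωs 0 ∈ Sfeas p →
      (∀ i : ℕ, Ωs (i + 1) ∈ Sfeas p ∧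
        ∀ Ω ∈ Sfeas p,
          gSur W y lb LPhi lO τ (Ωs (i + 1)) (Ωs i) ≤ gSur W y lb LPhi lO τ Ω (Ωs i)) →
      ∃ Ωstar : Matrix (Fin (p + 1)) (Fin p) ℝ,
        Ωstar ∈ Sfeas p ∧
        (∀ Ω ∈ Sfeas p, fObj W y lb LPhi lO Ωstar ≤ fObj W y lb LPhi lO Ω) ∧
        Filter.Tendsto Ωs Filter.atTop (nhds Ωstar)) := by
  obtain ⟨Ωm, hΩmS, hΩmMin⟩ := exists_min W y lb LPhi lO hlb hLPhi hlO
  have hτpos : (0:ℝ) < τ := lt_of_le_of_lt (specNorm_nonneg W) hτ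
  have hc : (0:ℝ) < τ^2/2 := by positivity
  have hlO' : ∀ k, 0 ≤ lO k := fun k => (hlO k).le
  refine ⟨⟨Ωm, hΩmS, hΩmMin⟩, ?_⟩
  intro Ωs h0 hstep
  set F := fObj W y lb LPhi lO with hF
  have hmemS : ∀ i, Ωs i ∈ Sfeas p := by
    intro i; cases i with
    | zero => exact h0
    | succ j => exact (hstep j).1
  have KEY : ∀ Z ∈ Sfeas p, ∀ i : ℕ,
      F (Ωs (i+1)) + (τ^2/2) * nsqM (Ωs (i+1) - Z) ≤ F Z + (τ^2/2) * nsqM (Ωs i - Z) :=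
    fun Z hZ i => key_ineq W y lb LPhi lO τ hlb hLPhi hlO' hτ.le hZ (hstep i).1 (hstep i).2
  set e : ℕ → ℝ := fun i => nsqM (Ωs i - Ωm) with he
  set δ : ℕ → ℝ := fun i => F (Ωs i) - F Ωm with hδ
  have hδnn : ∀ i, 0 ≤ δ i := fun i => sub_nonneg.mpr (hΩmMin _ (hmemS i))
  have hrec : ∀ i, δ (i+1) + (τ^2/2) * e (i+1) ≤ (τ^2/2) * e i := by
    intro i
    have := KEY Ωm hΩmS i
    simp only [he, hδ]
    linarith
  have henn : ∀ i, 0 ≤ e i := by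
    intro i; rw [he]; exact nsqM_nonneg _
  have hentry : ∀ (i : ℕ) (j : Fin (p+1)) (k : Fin p), (Ωs i j k - Ωm j k)^2 ≤ e i := by
    intro i j k
    rw [he]
    have := entry_sq_le_nsqM (Ωs i - Ωm) j k
    simpa [Matrix.sub_apply] using this
  have hδdef : ∀ i, δ i = F (Ωs i) - F Ωm := fun i => by rw [hδ]
  clear_value e δ
  clear he hδ
  have hmono : ∀ i, e (i+1) ≤ e i := by
    intro i
    have h1 : (τ^2/2) * e (i+1) ≤ (τ^2/2) * e i := by linarith [hδnn (i+1), hrec i]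
    exact le_of_mul_le_mul_left h1 hc
  have hanti : Antitone e := antitone_nat_of_succ_le hmono
  have hpart : ∀ N, ∑ j ∈ Finset.range N, δ (j+1) ≤ (τ^2/2) * e 0 - (τ^2/2) * e N := by
    intro N; induction N with
    | zero => simp
    | succ N ih =>
      rw [Finset.sum_range_succ]
      have := hrec N
      linarith
  have hpart' : ∀ N, ∑ j ∈ Finset.range N, δ (j+1) ≤ (τ^2/2) * e 0 := by
    intro N
    have hEn : 0 ≤ e N := henn N
    have h1 := hpart N
    nlinarith
  have hsumm : Summable (fun j => δ (j+1)) :=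
    summable_of_sum_range_le (fun j => hδnn (j+1)) hpart'
  have hδ0 : Filter.Tendsto (fun j => δ (j+1)) Filter.atTop (nhds 0) :=
    hsumm.tendsto_atTop_zero
  have hδ0' : Filter.Tendsto δ Filter.atTop (nhds 0) :=
    (Filter.tendsto_add_atTop_iff_nat 1).mp hδ0
  have hebound : ∀ i, e i ≤ e 0 := fun i => hanti (Nat.zero_le i)
  set R := Real.sqrt (e 0) with hR
  set K : Set (Matrix (Fin (p + 1)) (Fin p) ℝ) :=
    Set.pi Set.univ (fun j => Set.pi Set.univ
      (fun k => Set.Icc (Ωm j k - R) (Ωm j k + R))) with hK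
  have hKcomp : IsCompact K :=
    isCompact_univ_pi fun _ => isCompact_univ_pi fun _ => isCompact_Icc
  have hmemK : ∀ i, Ωs i ∈ K := by
    intro i j _ k _
    have h1 : (Ωs i j k - Ωm j k)^2 ≤ e i := hentry i j k
    have h2 : |Ωs i j k - Ωm j k| ≤ R := by
      rw [← Real.sqrt_sq_eq_abs]
      exact Real.sqrt_le_sqrt (le_trans h1 (hebound i))
    have h3 := abs_le.mp h2
    exact ⟨by linarith [h3.1], by linarith [h3.2]⟩
  obtain ⟨L, hLK, φ, hφ, hφtend⟩ := hKcomp.tendsto_subseq hmemK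
  have hLS : L ∈ Sfeas p :=
    isClosed_Sfeas.mem_of_tendsto hφtend (Filter.Eventually.of_forall fun i => hmemS (φ i))
  have hFtend : Filter.Tendsto (fun i => F (Ωs (φ i))) Filter.atTop (nhds (F L)) :=
    ((fObj_continuous W y lb LPhi lO).tendsto L).comp hφtend
  have hδφ : Filter.Tendsto (fun i => δ (φ i)) Filter.atTop (nhds 0) :=
    hδ0'.comp (hφ.tendsto_atTop)
  have hFtend2 : Filter.Tendsto (fun i => F (Ωs (φ i))) Filter.atTop (nhds (F Ωm)) := by
    have heq : (fun i => F (Ωs (φ i))) = fun i => δ (φ i) + F Ωm := by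
      funext i; rw [hδdef]; ring
    rw [heq]
    simpa using hδφ.add_const (F Ωm)
  have hFL : F L = F Ωm := tendsto_nhds_unique hFtend hFtend2
  have hLmin : ∀ Ω ∈ Sfeas p, F L ≤ F Ω := fun Ω hΩ => hFL ▸ hΩmMin Ω hΩ
  set e' : ℕ → ℝ := fun i => nsqM (Ωs i - L) with he'
  have he'nn : ∀ i, 0 ≤ e' i := by
    intro i; rw [he']; exact nsqM_nonneg _
  have hrec' : ∀ i, (τ^2/2) * e' (i+1) ≤ (τ^2/2) * e' i := by
    intro i
    have h1 := KEY L hLS i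
    have h2 : F L ≤ F (Ωs (i+1)) := hLmin _ (hmemS (i+1))
    simp only [he']
    linarith
  have hentry' : ∀ (i : ℕ) (j : Fin (p+1)) (k : Fin p), (Ωs i j k - L j k)^2 ≤ e' i := by
    intro i j k
    rw [he']
    have := entry_sq_le_nsqM (Ωs i - L) j k
    simpa [Matrix.sub_apply] using this
  have hcontnsq : Continuous (fun A : Matrix (Fin (p+1)) (Fin p) ℝ => nsqM (A - L)) := by
    have heq : (fun A : Matrix (Fin (p+1)) (Fin p) ℝ => nsqM (A - L))
        = fun A => ∑ i, ∑ k, (A i k - L i k)^2 := by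
      funext A; unfold nsqM; simp [Matrix.sub_apply]
    rw [heq]; fun_prop
  have he'φ : Filter.Tendsto (fun i => e' (φ i)) Filter.atTop (nhds 0) := by
    have h := (hcontnsq.tendsto L).comp hφtend
    have hz : nsqM (L - L) = 0 := by simp [nsqM, Matrix.sub_apply]
    rw [hz] at h
    exact h
  clear_value e'
  clear he'
  have hmono' : ∀ i, e' (i+1) ≤ e' i := fun i => le_of_mul_le_mul_left (hrec' i) hc
  have hanti' : Antitone e' := antitone_nat_of_succ_le hmono'
  have he'0 : Filter.Tendsto e' Filter.atTop (nhds 0) := by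
    rw [Metric.tendsto_atTop]
    intro ε hε
    rw [Metric.tendsto_atTop] at he'φ
    obtain ⟨N₀, hN₀⟩ := he'φ ε hε
    refine ⟨φ N₀, fun m hm => ?_⟩
    have h1 : e' m ≤ e' (φ N₀) := hanti' hm
    have h2 := hN₀ N₀ (le_refl N₀)
    rw [Real.dist_0_eq_abs] at h2 ⊢
    rw [abs_of_nonneg (he'nn _)] at h2 ⊢
    linarith
  refine ⟨L, hLS, hLmin, ?_⟩
  refine tendsto_matrix_of_entries Ωs L fun j k => ?_
  have hsq : Filter.Tendsto (fun i => (Ωs i j k - L j k)^2) Filter.atTop (nhds 0) := by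
    exact squeeze_zero (fun i => sq_nonneg _) (fun i => hentry' i j k) he'0
  have habs : Filter.Tendsto (fun i => |Ωs i j k - L j k|) Filter.atTop (nhds 0) := by
    have h := (Real.continuous_sqrt.tendsto 0).comp hsq
    simp only [Function.comp_def, Real.sqrt_zero] at h
    have heq : (fun i => Real.sqrt ((Ωs i j k - L j k)^2))
        = fun i => |Ωs i j k - L j k| := by
      funext i; rw [Real.sqrt_sq_eq_abs]
    rwa [heq] at h
  have hd : Filter.Tendsto (fun i => Ωs i j k - L j k) Filter.atTop (nhds 0) := by
    have hneg : Filter.Tendsto (fun i => -|Ωs i j k - L j k|) Filter.atTop (nhds 0) := by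
      simpa using habs.neg
    exact tendsto_of_tendsto_of_tendsto_of_le_of_le hneg habs
      (fun i => neg_abs_le _) (fun i => le_abs_self _)
  have hfin := hd.add_const (L j k)
  simpa using hfin
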